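/- If G is a graph with n vertices and minimum degree at least 4, then γ_{2,2}(G) ≤ (4/5)·n. -/

import Mathlib

open SimpleGraph Finset

private lemma auxL1 {V : Type*} [DecidableEq V] (U : Finset V) :
    ∑ C ∈ U.powerset, (2:ℝ)^((U \ C).card) = 3 ^ U.card := by
  induction U using Finset.induction_on with
  | empty => simp
  | @insert a s ha ih =>
    rw [Finset.sum_powerset_insert ha]
    have e1 : ∑ t ∈ s.powerset, (2:ℝ)^(((insert a s) \ t).card)
        = 2 * ∑ t ∈ s.powerset, (2:ℝ)^((s \ t).card) := by
      rw [Finset.mul_sum]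
      refine Finset.sum_congr rfl fun t ht => ?_
      have hts : t ⊆ s := Finset.mem_powerset.1 ht
      have hat : a ∉ t := fun h => ha (hts h)
      have h1 : (insert a s) \ t = insert a (s \ t) := by
        ext x
        simp only [Finset.mem_sdiff, Finset.mem_insert]
        constructor
        · rintro ⟨rfl | hx, hx2⟩
          · exact Or.inl rfl
          · exact Or.inr ⟨hx, hx2⟩
        · rintro (rfl | ⟨hx, hx2⟩)
          · exact ⟨Or.inl rfl, hat⟩
          · exact ⟨Or.inr hx, hx2⟩
      have h2 : a ∉ s \ t := fun h => ha (Finset.mem_sdiff.1 h).1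
      rw [h1, Finset.card_insert_of_notMem h2, pow_succ]; ring
    have e2 : ∑ t ∈ s.powerset, (2:ℝ)^(((insert a s) \ (insert a t)).card)
        = ∑ t ∈ s.powerset, (2:ℝ)^((s \ t).card) := by
      refine Finset.sum_congr rfl fun t ht => ?_
      have h1 : (insert a s) \ (insert a t) = s \ t := by
        ext x; simp only [Finset.mem_sdiff, Finset.mem_insert]
        constructor
        · rintro ⟨hx1 | hx1, hx2⟩ <;> tauto
        · rintro ⟨hx1, hx2⟩
          exact ⟨Or.inr hx1, fun h => h.elim (fun he => ha (he ▸ hx1)) hx2⟩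
      rw [h1]
    rw [e1, e2, ih, Finset.card_insert_of_notMem ha, pow_succ]; ring

private lemma auxSplit {V : Type*} [Fintype V] [DecidableEq V] (A : Finset V)
    (f : Finset V → ℝ) :
    ∑ T ∈ (Finset.univ : Finset V).powerset, (2:ℝ)^((Finset.univ \ T).card) * f (T ∩ A)
      = 3 ^ ((Finset.univ \ A : Finset V)).card
        * ∑ B ∈ A.powerset, (2:ℝ)^((A \ B).card) * f B := by
  classical
  have key : ∑ T ∈ (Finset.univ : Finset V).powerset,
        (2:ℝ)^((Finset.univ \ T).card) * f (T ∩ A)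
      = ∑ p ∈ A.powerset ×ˢ (Finset.univ \ A).powerset,
        (2:ℝ)^((A \ p.1).card) * ((2:ℝ)^(((Finset.univ \ A) \ p.2).card) * f p.1) := by
    refine Finset.sum_nbij' (i := fun T => (T ∩ A, T \ A)) (j := fun p => p.1 ∪ p.2)
      ?_ ?_ ?_ ?_ ?_
    · intro T _
      simp only [Finset.mem_product, Finset.mem_powerset]
      exact ⟨Finset.inter_subset_right, Finset.sdiff_subset_sdiff (Finset.subset_univ T) le_rfl⟩
    · intro p _
      simp [Finset.mem_powerset]
    · intro T _
      ext x; simp only [Finset.mem_union, Finset.mem_inter, Finset.mem_sdiff]; tauto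
    · intro p hp
      simp only [Finset.mem_product, Finset.mem_powerset] at hp
      obtain ⟨h1, h2⟩ := hp
      have h2' : ∀ x ∈ p.2, x ∉ A := fun x hx => (Finset.mem_sdiff.1 (h2 hx)).2
      have hA : (p.1 ∪ p.2) ∩ A = p.1 := by
        ext x
        simp only [Finset.mem_inter, Finset.mem_union]
        constructor
        · rintro ⟨hx1 | hx1, hx2⟩
          · exact hx1
          · exact absurd hx2 (h2' x hx1)
        · intro hx; exact ⟨Or.inl hx, h1 hx⟩
      have hB : (p.1 ∪ p.2) \ A = p.2 := by
        ext x
        simp only [Finset.mem_sdiff, Finset.mem_union]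
        constructor
        · rintro ⟨hx1 | hx1, hx2⟩
          · exact absurd (h1 hx1) hx2
          · exact hx1
        · intro hx; exact ⟨Or.inr hx, h2' x hx⟩
      exact Prod.ext hA hB
    · intro T _
      have hc : (Finset.univ \ T).card = (A \ (T ∩ A)).card + ((Finset.univ \ A) \ (T \ A)).card := by
        have h1 : A \ (T ∩ A) = A \ T := by
          ext x; simp only [Finset.mem_sdiff, Finset.mem_inter]; tauto
        have h2 : (Finset.univ \ A) \ (T \ A) = (Finset.univ \ A) \ T := by
          ext x; simp only [Finset.mem_sdiff, Finset.mem_univ, true_and]; tauto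
        have h3 : (Finset.univ \ T) = (A \ T) ∪ ((Finset.univ \ A) \ T) := by
          ext x; simp only [Finset.mem_sdiff, Finset.mem_union, Finset.mem_univ, true_and]; tauto
        have h4 : Disjoint (A \ T) ((Finset.univ \ A) \ T) := by
          rw [Finset.disjoint_left]
          intro x hx hx'
          exact (Finset.mem_sdiff.1 (Finset.mem_sdiff.1 hx').1).2 (Finset.mem_sdiff.1 hx).1
        rw [h1, h2, h3, Finset.card_union_of_disjoint h4]
      rw [hc, pow_add]; ring
  rw [key, Finset.sum_product]
  have inner : ∀ B ∈ A.powerset,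
      ∑ C ∈ (Finset.univ \ A : Finset V).powerset,
        (2:ℝ)^((A \ B).card) * ((2:ℝ)^(((Finset.univ \ A) \ C).card) * f B)
      = (3:ℝ) ^ ((Finset.univ \ A : Finset V)).card * ((2:ℝ)^((A \ B).card) * f B) := by
    intro B _
    rw [← Finset.mul_sum, ← Finset.sum_mul, auxL1]; ring
  calc ∑ B ∈ A.powerset, ∑ C ∈ (Finset.univ \ A : Finset V).powerset,
        (2:ℝ)^((A \ B).card) * ((2:ℝ)^(((Finset.univ \ A) \ C).card) * f B)
      = ∑ B ∈ A.powerset, (3:ℝ) ^ ((Finset.univ \ A : Finset V)).card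
          * ((2:ℝ)^((A \ B).card) * f B) := Finset.sum_congr rfl inner
    _ = _ := by rw [← Finset.mul_sum]

private lemma auxS2 {V : Type*} [Fintype V] [DecidableEq V] (m : ℕ)
    (hm : Fintype.card V = m + 1) :
    ∑ T ∈ (Finset.univ : Finset V).powerset, (2:ℝ)^((Finset.univ \ T).card) * (T.card : ℝ)
      = (Fintype.card V : ℝ) * 3 ^ m := by
  classical
  have hcard : ∀ T : Finset V, (T.card : ℝ) = ∑ v ∈ Finset.univ, ((T ∩ {v}).card : ℝ) := by
    intro T
    have : ∀ v ∈ (Finset.univ : Finset V), ((T ∩ {v}).card : ℝ) = if v ∈ T then 1 else 0 := by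
      intro v _
      by_cases h : v ∈ T
      · rw [Finset.inter_singleton_of_mem h]; simp [h]
      · rw [Finset.inter_singleton_of_notMem h]; simp [h]
    rw [Finset.sum_congr rfl this, Finset.sum_ite_mem, Finset.univ_inter, Finset.sum_const]
    simp
  calc ∑ T ∈ (Finset.univ : Finset V).powerset, (2:ℝ)^((Finset.univ \ T).card) * (T.card : ℝ)
      = ∑ T ∈ (Finset.univ : Finset V).powerset, ∑ v ∈ Finset.univ,
          (2:ℝ)^((Finset.univ \ T).card) * ((T ∩ {v}).card : ℝ) := by
        refine Finset.sum_congr rfl fun T _ => ?_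
        rw [hcard T, Finset.mul_sum]
    _ = ∑ v ∈ Finset.univ, ∑ T ∈ (Finset.univ : Finset V).powerset,
          (2:ℝ)^((Finset.univ \ T).card) * ((T ∩ {v}).card : ℝ) := Finset.sum_comm
    _ = ∑ v ∈ (Finset.univ : Finset V), (3:ℝ) ^ m := by
        refine Finset.sum_congr rfl fun v _ => ?_
        rw [auxSplit ({v} : Finset V) (fun B => (B.card : ℝ))]
        have h1 : ((Finset.univ \ {v} : Finset V)).card = m := by
          rw [Finset.card_sdiff_of_subset (Finset.subset_univ _), Finset.card_univ, hm,
            Finset.card_singleton]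
          omega
        have h2 : ∑ B ∈ ({v} : Finset V).powerset,
            (2:ℝ)^((({v} : Finset V) \ B).card) * (B.card : ℝ) = 1 := by
          have hp : ({v} : Finset V).powerset = {∅, {v}} := by
            ext B
            simp [Finset.mem_powerset, Finset.subset_singleton_iff]
          rw [hp, Finset.sum_insert (by simp only [Finset.mem_singleton]; exact fun h => (Finset.singleton_ne_empty v) h.symm)]
          simp
        rw [h1, h2, mul_one]
    _ = (Fintype.card V : ℝ) * 3 ^ m := by
        rw [Finset.sum_const, Finset.card_univ]; simp [mul_comm]

private lemma auxS3 {V : Type*} [Fintype V] [DecidableEq V] (m : ℕ)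
    (hm : Fintype.card V = m + 4) (A : Finset V) (hA : A.card = 4) :
    ∑ T ∈ (Finset.univ : Finset V).powerset,
        (2:ℝ)^((Finset.univ \ T).card) * (((T ∩ A).card - 2 : ℕ) : ℝ)
      = 3 ^ m * 10 := by
  classical
  rw [auxSplit A (fun B => ((B.card - 2 : ℕ) : ℝ))]
  have h1 : ((Finset.univ \ A : Finset V)).card = m := by
    rw [Finset.card_sdiff_of_subset (Finset.subset_univ _), Finset.card_univ, hm, hA]
    omega
  have h2 : ∑ B ∈ A.powerset, (2:ℝ)^((A \ B).card) * ((B.card - 2 : ℕ) : ℝ) = 10 := by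
    rw [Finset.sum_powerset]
    have hstep : ∀ j ∈ Finset.range (A.card + 1),
        ∑ B ∈ Finset.powersetCard j A, (2:ℝ)^((A \ B).card) * ((B.card - 2 : ℕ) : ℝ)
        = (Nat.choose 4 j : ℝ) * ((2:ℝ)^(4 - j) * ((j - 2 : ℕ) : ℝ)) := by
      intro j _
      have : ∀ B ∈ Finset.powersetCard j A,
          (2:ℝ)^((A \ B).card) * ((B.card - 2 : ℕ) : ℝ)
          = (2:ℝ)^(4 - j) * ((j - 2 : ℕ) : ℝ) := by
        intro B hB
        obtain ⟨hBA, hBc⟩ := Finset.mem_powersetCard.1 hB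
        rw [Finset.card_sdiff_of_subset hBA, hA, hBc]
      rw [Finset.sum_congr rfl this, Finset.sum_const, Finset.card_powersetCard, hA]
      simp [mul_comm]
    rw [Finset.sum_congr rfl hstep, hA]
    rw [Finset.sum_range_succ, Finset.sum_range_succ, Finset.sum_range_succ,
      Finset.sum_range_succ, Finset.sum_range_succ, Finset.sum_range_zero]
    norm_num
  rw [h1, h2]

def IsAbDom {V : Type*} [Fintype V] [DecidableEq V] (G : SimpleGraph V)
    [DecidableRel G.Adj] (a b : ℕ) (S : Finset V) : Prop :=
  (∀ v ∈ S, a ≤ (G.neighborFinset v ∩ S).card) ∧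
  (∀ v ∉ S, b ≤ (G.neighborFinset v ∩ S).card)

theorem stmt2 {V : Type*} [Fintype V] [DecidableEq V] (G : SimpleGraph V) [DecidableRel G.Adj] (hd : 4 ≤ G.minDegree) :
    ∃ S : Finset V, IsAbDom G 2 2 S ∧ (S.card : ℝ) ≤ 4 / 5 * Fintype.card V := by
  classical
  by_cases hV : IsEmpty V
  · refine ⟨∅, ⟨fun v _ => (hV.false v).elim, fun v _ => (hV.false v).elim⟩, ?_⟩
    have h0 : Fintype.card V = 0 := Fintype.card_eq_zero
    simp [h0]
  have : Nonempty V := not_isEmpty_iff.mp hV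
  have hdeg : ∀ v : V, 4 ≤ (G.neighborFinset v).card := by
    intro v
    rw [G.card_neighborFinset_eq_degree]
    exact hd.trans (G.minDegree_le_degree v)
  choose A hA1 hA2 using fun v : V => Finset.exists_subset_card_eq (hdeg v)
  set n := Fintype.card V with hn
  obtain ⟨v₀⟩ := ‹Nonempty V›
  have hn5 : 5 ≤ n := by
    have hv₀ : v₀ ∉ A v₀ := fun h => G.notMem_neighborFinset_self v₀ (hA1 v₀ h)
    have h5 := Finset.card_le_card (Finset.subset_univ (insert v₀ (A v₀)))
    rw [Finset.card_insert_of_notMem hv₀, hA2 v₀, Finset.card_univ] at h5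
    exact h5
  obtain ⟨m, hmn⟩ : ∃ m, n = m + 5 := ⟨n - 5, by omega⟩
  have hS2 := auxS2 (V := V) (m + 4) (by omega)
  have hS3 : ∀ v : V, ∑ T ∈ (Finset.univ : Finset V).powerset,
      (2:ℝ)^((Finset.univ \ T).card) * (((T ∩ A v).card - 2 : ℕ) : ℝ) = 3^(m+1) * 10 :=
    fun v => auxS3 (m+1) (by omega) (A v) (hA2 v)
  have htot : ∑ T ∈ (Finset.univ : Finset V).powerset,
      (2:ℝ)^((Finset.univ \ T).card) *
        ((T.card : ℝ) - ∑ v ∈ Finset.univ, (((T ∩ A v).card - 2 : ℕ) : ℝ))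
      = 17 * n * 3^(m+1) := by
    have expand : ∀ T ∈ (Finset.univ : Finset V).powerset,
        (2:ℝ)^((Finset.univ \ T).card) *
          ((T.card : ℝ) - ∑ v ∈ Finset.univ, (((T ∩ A v).card - 2 : ℕ) : ℝ))
        = (2:ℝ)^((Finset.univ \ T).card) * (T.card : ℝ)
          - ∑ v ∈ Finset.univ,
              (2:ℝ)^((Finset.univ \ T).card) * (((T ∩ A v).card - 2 : ℕ) : ℝ) := by
      intro T _
      rw [mul_sub, Finset.mul_sum]
    rw [Finset.sum_congr rfl expand, Finset.sum_sub_distrib, hS2, Finset.sum_comm]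
    have h2 : ∑ v ∈ (Finset.univ : Finset V), ∑ T ∈ (Finset.univ : Finset V).powerset,
        (2:ℝ)^((Finset.univ \ T).card) * (((T ∩ A v).card - 2 : ℕ) : ℝ)
        = (n : ℝ) * (3^(m+1) * 10) := by
      rw [Finset.sum_congr rfl (fun v _ => hS3 v), Finset.sum_const, Finset.card_univ, ← hn,
        nsmul_eq_mul]
    rw [h2]
    have hp : (3:ℝ)^(m+4) = 3^(m+1) * 27 := by
      rw [show m + 4 = (m+1) + 3 by omega, pow_add]; norm_num
    rw [hp]; ring
  have hwpos : ∀ T : Finset V, (0:ℝ) < 2^((Finset.univ \ T).card) := fun T => by positivity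
  have hex : ∃ T ∈ (Finset.univ : Finset V).powerset,
      (2:ℝ)^((Finset.univ \ T).card) * (17 * n / 81)
        ≤ (2:ℝ)^((Finset.univ \ T).card) *
            ((T.card : ℝ) - ∑ v ∈ Finset.univ, (((T ∩ A v).card - 2 : ℕ) : ℝ)) := by
    apply Finset.exists_le_of_sum_le ⟨∅, Finset.empty_mem_powerset _⟩
    rw [htot, ← Finset.sum_mul, auxL1, Finset.card_univ, ← hn]
    have hp : (3:ℝ)^n = 3^(m+1) * 81 := by
      rw [hmn, show m + 5 = (m+1) + 4 by omega, pow_add]; norm_num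
    rw [hp]
    exact le_of_eq (by ring)
  obtain ⟨T₀, -, hT₀⟩ := hex
  have hT₀' : (17 * n / 81 : ℝ)
      ≤ (T₀.card : ℝ) - ((∑ v ∈ Finset.univ, ((T₀ ∩ A v).card - 2) : ℕ) : ℝ) := by
    have h := (mul_le_mul_iff_right₀ (hwpos T₀)).mp hT₀
    push_cast at h ⊢
    linarith
  choose R hR1 hR2 using fun v : V =>
    Finset.exists_subset_card_eq (Nat.sub_le (T₀ ∩ A v).card 2)
  set Rall := Finset.univ.biUnion R with hRall
  set T' := T₀ \ Rall with hT'
  set S := (Finset.univ : Finset V) \ T' with hS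
  have key : ∀ v : V, 2 ≤ ((G.neighborFinset v) ∩ S).card := by
    intro v
    have hsub1 : A v ∩ S ⊆ G.neighborFinset v ∩ S :=
      Finset.inter_subset_inter (hA1 v) (Finset.Subset.refl S)
    refine le_trans ?_ (Finset.card_le_card hsub1)
    have h5 : A v ∩ T' ⊆ (T₀ ∩ A v) \ R v := by
      intro x hx
      rw [Finset.mem_inter, hT', Finset.mem_sdiff] at hx
      obtain ⟨hxA, hxT₀, hxR⟩ := hx
      rw [Finset.mem_sdiff, Finset.mem_inter]
      exact ⟨⟨hxT₀, hxA⟩, fun h => hxR (Finset.mem_biUnion.2 ⟨v, Finset.mem_univ v, h⟩)⟩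
    have h6 : (A v ∩ T').card ≤ 2 := by
      have h := Finset.card_le_card h5
      rw [Finset.card_sdiff_of_subset (hR1 v), hR2 v] at h
      omega
    have h7 : A v ∩ S = A v \ T' := by
      ext x
      rw [hS]
      simp only [Finset.mem_inter, Finset.mem_sdiff, Finset.mem_univ, true_and]
    have h8 : (A v \ T').card + (A v ∩ T').card = (A v).card :=
      Finset.card_sdiff_add_card_inter _ _
    rw [h7]
    rw [hA2 v] at h8
    omega
  have hmsum : Rall.card ≤ ∑ v ∈ Finset.univ, ((T₀ ∩ A v).card - 2) := by
    refine le_trans (Finset.card_biUnion_le) ?_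
    exact Finset.sum_le_sum fun v _ => le_of_eq (hR2 v)
  have h9 : T₀.card ≤ T'.card + ∑ v ∈ Finset.univ, ((T₀ ∩ A v).card - 2) := by
    have hsplit : (T₀ \ Rall).card + (T₀ ∩ Rall).card = T₀.card :=
      Finset.card_sdiff_add_card_inter _ _
    have hint : (T₀ ∩ Rall).card ≤ Rall.card := Finset.card_le_card Finset.inter_subset_right
    rw [hT']
    omega
  have hT'card : (n:ℝ)/5 ≤ (T'.card : ℝ) := by
    have h10 : (T₀.card : ℝ) ≤ (T'.card : ℝ) + ((∑ v ∈ Finset.univ, ((T₀ ∩ A v).card - 2) : ℕ) : ℝ) := by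
      exact_mod_cast h9
    have hnn : (0:ℝ) ≤ (n:ℝ) := Nat.cast_nonneg n
    linarith
  refine ⟨S, ⟨fun v _ => key v, fun v _ => key v⟩, ?_⟩
  have hT'n : T'.card ≤ n := Finset.card_le_univ T'
  have hScard : (S.card : ℝ) = (n:ℝ) - (T'.card : ℝ) := by
    rw [hS, Finset.card_sdiff_of_subset (Finset.subset_univ _), Finset.card_univ, ← hn,
      Nat.cast_sub hT'n]
  rw [hScard]
  linarith
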